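/- arXiv:2112.07300 — 5 statements merged into one kernel-verified Lean document; each statement's English description precedes it below -/
import Mathlib

section
/- Let n ≥ 2, β > 0, R ≥ 1, and define E(R) = (β · Per(B_1) · Φ_n'(1)) / (Φ_n'(R) + β(Φ_n(R) − Φ_n(1))), where Φ_n(ρ) = log ρ if n = 2 and Φ_n(ρ) = −1/((n−2)ρ^{n−2}) if n ≥ 3, Φ_n'(ρ) = ρ^{1−n}, and Per(B_1) = n·ω_n is the perimeter of the unit ball. Then E'(R) ≤ 0 if and only if R ≥ (n−1)/β. -/
open Real Set MeasureTheory

theorem stmt_1 (n : ℕ) (hn : 2 ≤ n) (β : ℝ) (hβ : 0 < β) (ω : ℝ)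
    (hω : ω = (MeasureTheory.volume (Metric.ball (0 : EuclideanSpace ℝ (Fin n)) 1)).toReal)
    (Phi : ℝ → ℝ)
    (hPhi : ∀ ρ : ℝ, Phi ρ = if n = 2 then Real.log ρ else -1 / (((n : ℝ) - 2) * ρ ^ (n - 2)))
    (E : ℝ → ℝ)
    (hE : ∀ R : ℝ, E R =
      β * ((n : ℝ) * ω) * ((1 : ℝ) ^ ((1 : ℤ) - n)) /
        (R ^ ((1 : ℤ) - n) + β * (Phi R - Phi 1))) :
    ∀ R : ℝ, 1 ≤ R → (deriv E R ≤ 0 ↔ ((n : ℝ) - 1) / β ≤ R) := by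
  intro R hR
  have hR0 : (0:ℝ) < R := lt_of_lt_of_le one_pos hR
  have hRne : R ≠ 0 := ne_of_gt hR0
  have hn2 : (2:ℝ) ≤ (n:ℝ) := by exact_mod_cast hn
  -- positivity of ω
  have hω0 : 0 < ω := by
    rw [hω]
    refine ENNReal.toReal_pos (ne_of_gt (Metric.measure_ball_pos _ _ one_pos)) ?_
    exact (measure_ball_lt_top).ne
  set C : ℝ := β * ((n : ℝ) * ω) * ((1 : ℝ) ^ ((1 : ℤ) - n)) with hC
  have hCpos : 0 < C := by
    rw [hC, one_zpow, mul_one]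
    have : (0:ℝ) < (n:ℝ) := by linarith
    positivity
  -- derivative of Phi at R
  have hPhiD : HasDerivAt Phi (R ^ ((1 : ℤ) - n)) R := by
    by_cases h2 : n = 2
    · have hfun : Phi = Real.log := by
        funext ρ; rw [hPhi]; simp [h2]
      rw [hfun]
      have := Real.hasDerivAt_log hRne
      convert this using 1
      rw [h2]; norm_num
    · have hn3 : 3 ≤ n := by omega
      have hne2 : ((n:ℝ) - 2) ≠ 0 := by
        have : (3:ℝ) ≤ (n:ℝ) := by exact_mod_cast hn3
        linarith
      have hfun : Phi = fun ρ : ℝ => (-((n:ℝ) - 2)⁻¹) * ρ ^ (-((n - 2 : ℕ) : ℤ)) := by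
        funext ρ
        rw [hPhi]
        simp only [h2, if_false]
        rw [zpow_neg, zpow_natCast, div_eq_mul_inv, mul_inv]
        ring
      rw [hfun]
      have hz := hasDerivAt_zpow (-((n - 2 : ℕ) : ℤ)) R (Or.inl hRne)
      have := hz.const_mul (-((n:ℝ) - 2)⁻¹)
      convert this using 1
      · rfl
      · rfl
      have hcast : (((n - 2 : ℕ) : ℤ) : ℝ) = (n:ℝ) - 2 := by
        push_cast [Nat.cast_sub hn]; ring
      have hexp : (-((n - 2 : ℕ) : ℤ)) - 1 = (1 : ℤ) - n := by
        omega
      rw [hexp]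
      push_cast [hcast]
      field_simp
  -- derivative of the denominator
  set D : ℝ → ℝ := fun R => R ^ ((1 : ℤ) - n) + β * (Phi R - Phi 1) with hD
  set D' : ℝ := (((1 : ℤ) - n : ℤ) : ℝ) * R ^ ((1 : ℤ) - n - 1) + β * R ^ ((1 : ℤ) - n) with hD'
  have hDD : HasDerivAt D D' R := by
    have h1 : HasDerivAt (fun R : ℝ => R ^ ((1 : ℤ) - n))
        ((((1 : ℤ) - n : ℤ) : ℝ) * R ^ ((1 : ℤ) - n - 1)) R := hasDerivAt_zpow _ R (Or.inl hRne)
    have h2 : HasDerivAt (fun R => β * (Phi R - Phi 1)) (β * R ^ ((1 : ℤ) - n)) R :=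
      (hPhiD.sub_const (Phi 1)).const_mul β
    exact h1.add h2
  -- positivity of D R
  have hPhimono : Phi 1 ≤ Phi R := by
    by_cases h2 : n = 2
    · rw [hPhi, hPhi]; simp [h2]
      exact Real.log_nonneg hR
    · have hn3 : 3 ≤ n := by omega
      have hne2 : (0:ℝ) < (n:ℝ) - 2 := by
        have : (3:ℝ) ≤ (n:ℝ) := by exact_mod_cast hn3
        linarith
      rw [hPhi, hPhi]
      simp only [h2, if_false, one_pow]
      have hpow : (1:ℝ) ≤ R ^ (n - 2) := one_le_pow₀ hR
      have hpow0 : (0:ℝ) < R ^ (n - 2) := by positivity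
      rw [div_le_div_iff₀ (by positivity) (by positivity)]
      nlinarith
  have hDpos : 0 < D R := by
    have : (0:ℝ) < R ^ ((1 : ℤ) - n) := zpow_pos hR0 _
    have hβm : 0 ≤ β * (Phi R - Phi 1) := mul_nonneg hβ.le (by linarith)
    simp only [hD]
    linarith
  have hDne : D R ≠ 0 := ne_of_gt hDpos
  -- derivative of E
  have hEfun : E = fun R => C / D R := by
    funext r; rw [hE r]
  have hED : HasDerivAt E ((0 * D R - C * D') / (D R) ^ 2) R := by
    rw [hEfun]
    exact (hasDerivAt_const R C).div hDD hDne
  have hderiv : deriv E R = (0 * D R - C * D') / (D R) ^ 2 := hED.deriv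
  rw [hderiv]
  have hD2 : (0:ℝ) < (D R) ^ 2 := pow_pos hDpos 2
  rw [div_le_iff₀ hD2, zero_mul, zero_mul, zero_sub, neg_nonpos]
  -- 0 ≤ C * D' ↔ 0 ≤ D'
  have hstep : 0 ≤ C * D' ↔ 0 ≤ D' := by
    constructor
    · intro h
      by_contra hlt
      push_neg at hlt
      nlinarith
    · intro h; exact mul_nonneg hCpos.le h
  rw [hstep]
  -- rewrite D'
  have hpow1 : R ^ ((1 : ℤ) - n) = R ^ ((1 : ℤ) - n - 1) * R := by
    rw [← zpow_add_one₀ hRne]; ring_nf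
  have ht : (0:ℝ) < R ^ ((1 : ℤ) - n - 1) := zpow_pos hR0 _
  have hD'eq : D' = R ^ ((1 : ℤ) - n - 1) * ((1 - (n:ℝ)) + β * R) := by
    rw [hD', hpow1]
    push_cast
    ring
  rw [hD'eq]
  constructor
  · intro h
    have h2 : 0 ≤ (1 - (n:ℝ)) + β * R := nonneg_of_mul_nonneg_right (by linarith [mul_nonneg ht.le (le_refl (0:ℝ))]) ht
    rw [div_le_iff₀ hβ]
    nlinarith
  · intro h
    rw [div_le_iff₀ hβ] at h
    have : 0 ≤ (1 - (n:ℝ)) + β * R := by nlinarith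
    exact mul_nonneg ht.le this
end

section
/- Let n ≥ 3 and 0 < β ≤ n−2. Then for all R ≥ 1, E_β(B_1,B_R) ≥ E_β(B_1,B_1), i.e., the function R ↦ (β n ω_n)/(R^{1−n} + β(1/(n−2) − 1/((n−2)R^{n−2}))) attains its minimum on [1,∞) at R = 1. -/
open Real Set MeasureTheory

theorem stmt_4 (n : ℕ) (hn : 3 ≤ n) (β : ℝ) (hβ0 : 0 < β) (hβ : β ≤ (n : ℝ) - 2) (ω : ℝ)
    (hω : ω = (MeasureTheory.volume (Metric.ball (0 : EuclideanSpace ℝ (Fin n)) 1)).toReal)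
    (E : ℝ → ℝ)
    (hE : ∀ R : ℝ, E R =
      β * (n : ℝ) * ω /
        (R ^ ((1 : ℤ) - n) +
          β * (1 / ((n : ℝ) - 2) - 1 / (((n : ℝ) - 2) * R ^ (n - 2))))) :
    ∀ R : ℝ, 1 ≤ R → E 1 ≤ E R := by
  intro R hR
  have hR0 : (0:ℝ) < R := lt_of_lt_of_le one_pos hR
  have hn3 : (3:ℝ) ≤ (n:ℝ) := by exact_mod_cast hn
  have hn2 : (0:ℝ) < (n:ℝ) - 2 := by linarith
  have hE1 : E 1 = β * n * ω := by
    rw [hE]; simp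
  have hω0 : 0 ≤ ω := by rw [hω]; exact ENNReal.toReal_nonneg
  have hnum : 0 ≤ β * n * ω := by positivity
  set t : ℝ := R ^ (n - 2) with ht
  have ht1 : 1 ≤ t := one_le_pow₀ hR
  have ht0 : 0 < t := lt_of_lt_of_le one_pos ht1
  -- the zpow term
  have hcast : ((n - 2 : ℕ) : ℤ) = (n : ℤ) - 2 := by omega
  have hz : R ^ ((2:ℤ) - n) = t⁻¹ := by
    rw [ht, ← zpow_natCast R (n-2), hcast, ← zpow_neg]
    ring_nf
  have hzle : R ^ ((1:ℤ) - n) ≤ t⁻¹ := by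
    rw [← hz]
    apply zpow_le_zpow_right₀ hR
    omega
  have hzpos : 0 < R ^ ((1:ℤ) - n) := zpow_pos hR0 _
  set D : ℝ := R ^ ((1:ℤ) - n) + β * (1 / ((n:ℝ) - 2) - 1 / (((n:ℝ) - 2) * t)) with hD
  have hsub : 0 ≤ 1 / ((n:ℝ) - 2) - 1 / (((n:ℝ) - 2) * t) := by
    rw [sub_nonneg]
    apply div_le_div_of_nonneg_left one_pos.le hn2
    nlinarith
  have hDpos : 0 < D := by
    have := mul_nonneg hβ0.le hsub
    rw [hD]; linarith
  have hD1 : D ≤ 1 := by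
    have key : β * (1 / ((n:ℝ) - 2) - 1 / (((n:ℝ) - 2) * t)) ≤ 1 - t⁻¹ := by
      have h1 : 1 / ((n:ℝ) - 2) - 1 / (((n:ℝ) - 2) * t) = (1 - t⁻¹) / ((n:ℝ) - 2) := by
        field_simp
      rw [h1, mul_div_assoc', div_le_iff₀ hn2]
      have h2 : 0 ≤ 1 - t⁻¹ := by
        rw [sub_nonneg]
        exact inv_le_one_of_one_le₀ ht1
      nlinarith
    rw [hD]; linarith
  rw [hE R, hE1]
  calc β * n * ω = β * n * ω / 1 := by ring
    _ ≤ β * n * ω / D := by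
        apply div_le_div_of_nonneg_left hnum hDpos hD1
end

section
/- Let n ≥ 2, β > 0, R > 1, and let u*(x) = 1 − β(Φ_n(|x|) − Φ_n(1))/(Φ_n'(R) + β(Φ_n(R) − Φ_n(1))) for 1 ≤ |x| ≤ R. Then |∇u*|/u* ≤ β on B_R \ B_1 if and only if for every ρ ∈ [1,R], E_β(B_1,B_ρ) ≥ E_β(B_1,B_R), where E_β(B_1,B_ρ) = (β n ω_n)/(Φ_n'(ρ) + β(Φ_n(ρ) − Φ_n(1))). -/
open Real Set MeasureTheory

lemma phi_hasDerivAt (n : ℕ) (hn : 2 ≤ n) (Phi : ℝ → ℝ)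
    (hPhi : ∀ ρ : ℝ, Phi ρ = if n = 2 then Real.log ρ else -1 / (((n : ℝ) - 2) * ρ ^ (n - 2)))
    {r : ℝ} (hr : 0 < r) : HasDerivAt Phi (r ^ ((1 : ℤ) - n)) r := by
  have hPhi' : Phi = fun ρ => if n = 2 then Real.log ρ else -1 / (((n : ℝ) - 2) * ρ ^ (n - 2)) :=
    funext hPhi
  subst hPhi'
  by_cases h : n = 2
  · subst h
    simp only [if_pos rfl]
    convert Real.hasDerivAt_log hr.ne' using 1
    norm_num
    rw [show ((1:ℤ) - ((2:ℕ):ℤ)) = -1 by norm_num, zpow_neg_one]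
  · have hn3 : 3 ≤ n := by omega
    simp only [if_neg h]
    set m := n - 2 with hm
    have hmn : ((m : ℝ)) = (n : ℝ) - 2 := by rw [hm, Nat.cast_sub hn]; norm_num
    have hn3' : (3:ℝ) ≤ (n:ℝ) := by exact_mod_cast hn3
    have hmpos : (0:ℝ) < (m:ℝ) := by rw [hmn]; linarith
    have hg : HasDerivAt (fun ρ : ℝ => ((n:ℝ)-2) * ρ^m) (((n:ℝ)-2)*((m:ℝ)*r^(m-1))) r :=
      (hasDerivAt_pow m r).const_mul _
    have hgne : ((n:ℝ)-2) * r^m ≠ 0 := by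
      apply mul_ne_zero
      · rw [← hmn]; exact hmpos.ne'
      · positivity
    have hd := (hasDerivAt_const r (-1:ℝ)).div hg hgne
    refine hd.congr_deriv (Eq.symm ?_)
    have hz : ((1:ℤ) - n) = -((n-1:ℕ):ℤ) := by push_cast [Nat.cast_sub (by omega : 1 ≤ n)]; ring
    rw [hz, zpow_neg, zpow_natCast, ← hmn]
    rw [eq_div_iff (by positivity : ((m:ℝ) * r^m)^2 ≠ 0)]
    have hrne : r ≠ 0 := hr.ne'
    field_simp
    have hpw : (r^m)^2 = r^(m-1) * r^(n-1) := by
      rw [← pow_mul, ← pow_add]; congr 1; omega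
    rw [hpw]; ring

theorem stmt_5 (n : ℕ) (hn : 2 ≤ n) (β R ω : ℝ) (hβ : 0 < β) (hR : 1 < R)
    (hω : ω = (MeasureTheory.volume (Metric.ball (0 : EuclideanSpace ℝ (Fin n)) 1)).toReal)
    (Phi : ℝ → ℝ)
    (hPhi : ∀ ρ : ℝ, Phi ρ = if n = 2 then Real.log ρ else -1 / (((n : ℝ) - 2) * ρ ^ (n - 2)))
    (U : ℝ → ℝ)
    (hU : ∀ r : ℝ, U r =
      1 - β * (Phi r - Phi 1) / (R ^ ((1 : ℤ) - n) + β * (Phi R - Phi 1)))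
    (E : ℝ → ℝ)
    (hE : ∀ ρ : ℝ, E ρ =
      β * (n : ℝ) * ω / (ρ ^ ((1 : ℤ) - n) + β * (Phi ρ - Phi 1))) :
    (∀ r ∈ Set.Icc (1 : ℝ) R, |deriv U r| / U r ≤ β) ↔
      ∀ ρ ∈ Set.Icc (1 : ℝ) R, E R ≤ E ρ := by
  have hωpos : 0 < ω := by
    rw [hω]
    refine ENNReal.toReal_pos ?_ ?_
    · exact (Metric.measure_ball_pos volume (0 : EuclideanSpace ℝ (Fin n)) one_pos).ne'
    · exact measure_ball_lt_top.ne
  -- strict monotonicity of Phi on [1, ∞)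
  have hmono : StrictMonoOn Phi (Ici (1:ℝ)) := by
    apply strictMonoOn_of_deriv_pos (convex_Ici 1)
    · intro x hx
      exact (phi_hasDerivAt n hn Phi hPhi (lt_of_lt_of_le one_pos hx)).continuousAt.continuousWithinAt
    · intro x hx
      rw [interior_Ici] at hx
      rw [(phi_hasDerivAt n hn Phi hPhi (lt_trans one_pos hx)).deriv]
      exact zpow_pos (lt_trans one_pos hx) _
  set D : ℝ := R ^ ((1 : ℤ) - n) + β * (Phi R - Phi 1) with hD_def
  have hR0 : (0:ℝ) < R := lt_trans one_pos hR
  have hPhiR : Phi 1 < Phi R := hmono (le_refl (1:ℝ)) hR.le hR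
  have hD : 0 < D := by
    have : (0:ℝ) < R ^ ((1 : ℤ) - n) := zpow_pos hR0 _
    nlinarith
  have hnpos : (0:ℝ) < (n:ℝ) := by positivity
  constructor <;> intro H r hr <;> obtain ⟨hr1, hrR⟩ := hr <;>
    have hr0 : (0:ℝ) < r := lt_of_lt_of_le one_pos hr1 <;>
    have hPhir1 : Phi 1 ≤ Phi r := by
      rcases eq_or_lt_of_le hr1 with h | h
      · rw [← h]
      · exact (hmono (le_refl (1:ℝ)) hr1 h).le
  all_goals {
    have hPhirR : Phi r ≤ Phi R := by
      rcases eq_or_lt_of_le hrR with h | h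
      · rw [h]
      · exact (hmono hr1 (le_trans hr1 hrR) h).le
    have hFr : 0 < r ^ ((1 : ℤ) - n) + β * (Phi r - Phi 1) := by
      have : (0:ℝ) < r ^ ((1 : ℤ) - n) := zpow_pos hr0 _
      nlinarith
    have hUr : 0 < U r := by
      rw [hU r]
      have h1 : β * (Phi r - Phi 1) ≤ β * (Phi R - Phi 1) := by nlinarith
      have h2 : β * (Phi r - Phi 1) / D < 1 := by
        rw [div_lt_one hD]
        have : (0:ℝ) < R ^ ((1 : ℤ) - n) := zpow_pos hR0 _
        rw [hD_def]; linarith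
      linarith
    have hderivU : deriv U r = -(β * r ^ ((1 : ℤ) - n) / D) := by
      have hUf : U = fun x => 1 - β * (Phi x - Phi 1) / D := funext hU
      rw [hUf]
      have h1 := (((phi_hasDerivAt n hn Phi hPhi hr0).sub_const (Phi 1)).const_mul β).div_const D
      exact (h1.const_sub 1).deriv
    have habs : |deriv U r| = β * r ^ ((1 : ℤ) - n) / D := by
      rw [hderivU, abs_neg, abs_of_pos]
      have : (0:ℝ) < r ^ ((1 : ℤ) - n) := zpow_pos hr0 _
      positivity
    have key : |deriv U r| / U r ≤ β ↔
        r ^ ((1 : ℤ) - n) + β * (Phi r - Phi 1) ≤ D := by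
      rw [div_le_iff₀ hUr, habs, hU r, div_le_iff₀ hD]
      have heq : β * (1 - β * (Phi r - Phi 1) / D) * D = β * (D - β * (Phi r - Phi 1)) := by
        field_simp
      rw [heq]
      constructor
      · intro h
        have := (mul_le_mul_iff_right₀ hβ).mp h
        linarith
      · intro h
        apply (mul_le_mul_iff_right₀ hβ).mpr
        linarith
    have keyE : E R ≤ E r ↔
        r ^ ((1 : ℤ) - n) + β * (Phi r - Phi 1) ≤ D := by
      rw [hE r, hE R, ← hD_def]
      rw [div_le_div_iff_of_pos_left (by positivity) hD hFr]
    first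
    | (rw [keyE]; rw [← key]; exact H r ⟨hr1, hrR⟩)
    | (rw [key]; rw [← keyE]; exact H r ⟨hr1, hrR⟩)
  }
end

section
/- Let n ≥ 3 and n−2 < β < n−1. Then there exists a unique R_β > (n−1)/β such that E_β(B_1, B_{R_β}) = E_β(B_1, B_1) = β n ω_n, where E_β(B_1,B_R) = (β n ω_n)/(R^{1−n} + β(1/(n−2) − 1/((n−2)R^{n−2}))). Moreover E_β(B_1,B_R) increases on [1,(n−1)/β] and decreases on [(n−1)/β,∞). -/
open Real Set MeasureTheory

theorem stmt_6 (n : ℕ) (hn : 3 ≤ n) (β ω : ℝ)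
    (hβl : (n : ℝ) - 2 < β) (hβu : β < (n : ℝ) - 1)
    (hω : ω = (MeasureTheory.volume (Metric.ball (0 : EuclideanSpace ℝ (Fin n)) 1)).toReal)
    (E : ℝ → ℝ)
    (hE : ∀ R : ℝ, E R =
      β * (n : ℝ) * ω /
        (R ^ ((1 : ℤ) - n) +
          β * (1 / ((n : ℝ) - 2) - 1 / (((n : ℝ) - 2) * R ^ (n - 2))))) :
    (∃! Rβ : ℝ, ((n : ℝ) - 1) / β < Rβ ∧ E Rβ = β * (n : ℝ) * ω) ∧
      E 1 = β * (n : ℝ) * ω ∧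
      MonotoneOn E (Set.Icc 1 (((n : ℝ) - 1) / β)) ∧
      AntitoneOn E (Set.Ici (((n : ℝ) - 1) / β)) := by
  have hn3 : (3:ℝ) ≤ (n:ℝ) := by exact_mod_cast hn
  have hc0 : (0:ℝ) < (n:ℝ) - 2 := by linarith
  have hβ0 : (0:ℝ) < β := by linarith
  set R₀ : ℝ := ((n:ℝ) - 1) / β with hR₀def
  have hR₀1 : 1 < R₀ := (one_lt_div hβ0).mpr (by linarith)
  -- the smooth version of the denominator
  set h : ℝ → ℝ := fun R => R ^ ((1:ℤ) - n) + β / ((n:ℝ) - 2)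
      - (β / ((n:ℝ) - 2)) * R ^ ((2:ℤ) - n) with hhdef
  have hexp : ((2:ℤ) - n) = -((n - 2 : ℕ) : ℤ) := by
    rw [Nat.cast_sub (by omega)]; push_cast; ring
  have hzp : ∀ R : ℝ, R ≠ 0 → R ^ ((2:ℤ) - n) = (R ^ (n - 2))⁻¹ := by
    intro R hR
    rw [hexp, zpow_neg, zpow_natCast]
  -- rewrite E via h
  have hE' : ∀ R : ℝ, R ≠ 0 → E R = β * (n:ℝ) * ω / h R := by
    intro R hR
    rw [hE R]
    congr 1
    rw [hhdef]
    simp only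
    rw [hzp R hR]
    have hpow : R ^ (n - 2) ≠ 0 := pow_ne_zero _ hR
    field_simp
    ring
  -- positivity of ω
  have hωpos : 0 < ω := by
    rw [hω]
    exact ENNReal.toReal_pos (Metric.measure_ball_pos volume 0 one_pos).ne'
      measure_ball_lt_top.ne
  have hnnpos : (0:ℝ) < (n:ℝ) := by linarith
  have hcpos : 0 < β * (n:ℝ) * ω := by positivity
  -- derivative of h
  have hderiv : ∀ R : ℝ, 0 < R →
      HasDerivAt h (R ^ (-(n:ℤ)) * (β * R - ((n:ℝ) - 1))) R := by
    intro R hR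
    have h1 : HasDerivAt (fun R : ℝ => R ^ ((1:ℤ) - n))
        ((((1:ℤ) - n : ℤ) : ℝ) * R ^ ((1:ℤ) - n - 1)) R :=
      hasDerivAt_zpow _ _ (Or.inl hR.ne')
    have h2 : HasDerivAt (fun R : ℝ => (β / ((n:ℝ) - 2)) * R ^ ((2:ℤ) - n))
        ((β / ((n:ℝ) - 2)) * ((((2:ℤ) - n : ℤ) : ℝ) * R ^ ((2:ℤ) - n - 1))) R :=
      (hasDerivAt_zpow _ _ (Or.inl hR.ne')).const_mul _
    have := ((h1.add_const (β / ((n:ℝ) - 2))).sub h2)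
    convert this using 1
    · rfl
    · rfl
    · rfl
    have e1 : ((1:ℤ) - n - 1) = -(n:ℤ) := by ring
    have e2 : ((2:ℤ) - n - 1) = -(n:ℤ) + 1 := by ring
    rw [e1, e2, zpow_add₀ hR.ne', zpow_one]
    push_cast
    field_simp
    ring
  have hcont : ∀ s : Set ℝ, s ⊆ Ioi 0 → ContinuousOn h s := by
    intro s hs x hx
    exact (hderiv x (hs hx)).continuousAt.continuousWithinAt
  have hIcc_sub : Icc (1:ℝ) R₀ ⊆ Ioi 0 := fun x hx => lt_of_lt_of_le one_pos hx.1
  have hIci_sub : Ici R₀ ⊆ Ioi 0 := fun x hx => lt_of_lt_of_le (by linarith : (0:ℝ) < R₀) hx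
  -- strict antitone on [1, R₀]
  have hanti : StrictAntiOn h (Icc 1 R₀) := by
    apply strictAntiOn_of_deriv_neg (convex_Icc 1 R₀) (hcont _ hIcc_sub)
    intro x hx
    rw [interior_Icc] at hx
    have hx0 : 0 < x := lt_trans one_pos hx.1
    rw [(hderiv x hx0).deriv]
    have h1 : 0 < x ^ (-(n:ℤ)) := zpow_pos hx0 _
    have h2 : β * x - ((n:ℝ) - 1) < 0 := by
      have := hx.2
      rw [hR₀def, lt_div_iff₀ hβ0] at this
      nlinarith
    exact mul_neg_of_pos_of_neg h1 h2
  -- strict monotone on [R₀, ∞)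
  have hmono : StrictMonoOn h (Ici R₀) := by
    apply strictMonoOn_of_deriv_pos (convex_Ici R₀) (hcont _ hIci_sub)
    intro x hx
    rw [interior_Ici] at hx
    have hx0 : 0 < x := lt_trans (by linarith) hx
    rw [(hderiv x hx0).deriv]
    have h1 : 0 < x ^ (-(n:ℤ)) := zpow_pos hx0 _
    have h2 : 0 < β * x - ((n:ℝ) - 1) := by
      have hx' : (↑n - 1) / β < x := hx
      rw [div_lt_iff₀ hβ0] at hx'
      nlinarith
    exact mul_pos h1 h2
  -- h 1 = 1
  have h1val : h 1 = 1 := by simp [hhdef]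
  -- h is positive on [1, ∞)
  have hpos : ∀ R : ℝ, 1 ≤ R → 0 < h R := by
    intro R hR
    have hR0 : (0:ℝ) < R := lt_of_lt_of_le one_pos hR
    have hz1 : 0 < R ^ ((1:ℤ) - n) := zpow_pos hR0 _
    have hz2 : R ^ ((2:ℤ) - n) ≤ 1 := by
      rw [hzp R hR0.ne']
      have : (1:ℝ) ≤ R ^ (n - 2) := one_le_pow₀ hR
      exact inv_le_one_of_one_le₀ this
    have hz3 : 0 < R ^ ((2:ℤ) - n) := zpow_pos hR0 _
    have hb : 0 < β / ((n:ℝ) - 2) := by positivity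
    rw [hhdef]
    simp only
    nlinarith
  -- h R₀ < 1
  have hR₀val : h R₀ < 1 := by
    have := hanti (left_mem_Icc.mpr hR₀1.le) (right_mem_Icc.mpr hR₀1.le) hR₀1
    rwa [h1val] at this
  -- a point M with h M > 1
  set M : ℝ := max R₀ (β / (β - ((n:ℝ) - 2))) with hMdef
  have hdpos : 0 < β - ((n:ℝ) - 2) := by linarith
  have hMR₀ : R₀ ≤ M := le_max_left _ _
  have hM1 : 1 ≤ M := le_trans hR₀1.le hMR₀
  have hM0 : (0:ℝ) < M := lt_of_lt_of_le one_pos hM1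
  have hMval : 1 < h M := by
    have hMb : β / (β - ((n:ℝ) - 2)) ≤ M := le_max_right _ _
    have hpowM : β / (β - ((n:ℝ) - 2)) ≤ M ^ (n - 2) :=
      le_trans hMb (le_self_pow₀ hM1 (by omega))
    have hfrac : 0 < β / (β - ((n:ℝ) - 2)) := by positivity
    have hinv : (M ^ (n - 2))⁻¹ ≤ (β - ((n:ℝ) - 2)) / β := by
      calc (M ^ (n - 2))⁻¹ ≤ (β / (β - ((n:ℝ) - 2)))⁻¹ := by
            apply inv_anti₀ hfrac hpowM
        _ = (β - ((n:ℝ) - 2)) / β := by rw [inv_div]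
    have hz1 : 0 < M ^ ((1:ℤ) - n) := zpow_pos hM0 _
    have hb : 0 < β / ((n:ℝ) - 2) := by positivity
    have key : (β / ((n:ℝ) - 2)) * M ^ ((2:ℤ) - n) ≤ β / ((n:ℝ) - 2) - 1 := by
      rw [hzp M hM0.ne']
      calc (β / ((n:ℝ) - 2)) * (M ^ (n - 2))⁻¹
          ≤ (β / ((n:ℝ) - 2)) * ((β - ((n:ℝ) - 2)) / β) :=
            mul_le_mul_of_nonneg_left hinv hb.le
        _ = β / ((n:ℝ) - 2) - 1 := by field_simp
    rw [hhdef]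
    simp only
    linarith
  -- IVT on [R₀, M]
  obtain ⟨Rβ, hRβmem, hRβval⟩ :=
    intermediate_value_Icc hMR₀ (hcont _ (fun x hx => lt_of_lt_of_le (by linarith)
      hx.1)) (show (1:ℝ) ∈ Icc (h R₀) (h M) from ⟨hR₀val.le, hMval.le⟩)
  have hRβgt : R₀ < Rβ := by
    rcases lt_or_eq_of_le hRβmem.1 with h' | h'
    · exact h'
    · exfalso; rw [← h'] at hRβval; linarith
  have hRβ0 : (0:ℝ) < Rβ := by linarith
  -- E R = βnω ↔ h R = 1 (for R ≠ 0)
  have hEeq : ∀ R : ℝ, R ≠ 0 → E R = β * (n:ℝ) * ω → h R = 1 := by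
    intro R hR hER
    rw [hE' R hR] at hER
    have hhne : h R ≠ 0 := by
      intro h0
      rw [h0, div_zero] at hER
      exact absurd hER.symm hcpos.ne'
    rw [div_eq_iff hhne] at hER
    have := hER.symm
    nlinarith [hcpos]
  constructor
  · refine ⟨Rβ, ⟨hRβgt, ?_⟩, ?_⟩
    · rw [hE' Rβ hRβ0.ne', hRβval, div_one]
    · rintro y ⟨hy1, hy2⟩
      have hy0 : (0:ℝ) < y := by linarith
      have hyval : h y = 1 := hEeq y hy0.ne' hy2
      exact hmono.injOn (mem_Ici.mpr hy1.le) (mem_Ici.mpr hRβmem.1)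
        (by rw [hyval, hRβval])
  refine ⟨?_, ?_, ?_⟩
  · rw [hE' 1 one_ne_zero, h1val, div_one]
  · intro a ha b hb hab
    have ha0 : (0:ℝ) < a := lt_of_lt_of_le one_pos ha.1
    have hb0 : (0:ℝ) < b := lt_of_lt_of_le one_pos hb.1
    rw [hE' a ha0.ne', hE' b hb0.ne']
    have hba : h b ≤ h a := hanti.antitoneOn ha hb hab
    have hbpos : 0 < h b := hpos b hb.1
    exact div_le_div_of_nonneg_left (le_of_lt hcpos) hbpos hba |>.trans_eq rfl
  · intro a ha b hb hab
    have ha1 : (1:ℝ) ≤ a := le_trans hR₀1.le ha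
    have hb1 : (1:ℝ) ≤ b := le_trans hR₀1.le hb
    have ha0 : (0:ℝ) < a := lt_of_lt_of_le one_pos ha1
    have hb0 : (0:ℝ) < b := lt_of_lt_of_le one_pos hb1
    rw [hE' a ha0.ne', hE' b hb0.ne']
    have hba : h a ≤ h b := hmono.monotoneOn ha hb hab
    have hapos : 0 < h a := hpos a ha1
    exact div_le_div_of_nonneg_left (le_of_lt hcpos) hapos hba
end

section
/- Let n ≥ 2 and Θ : [0,1] → [0,∞) be nondecreasing with Θ(0) = 0, differentiable at 1 with Θ'(1)² > 4(n−1)Θ(1) and Θ(1) > 0. Then there exists ε_0 > 0 such that for all ε ∈ (0, ε_0), n ω_n (1+ε)^{n−1} Θ(1 − Θ'(1)ε/2) + ω_n((1+ε)^n − 1) Θ'(1)²/4 < n ω_n Θ(1). -/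
open Real Set MeasureTheory

theorem stmt_12 (n : ℕ) (hn : 2 ≤ n) (ω : ℝ)
    (hω : ω = (MeasureTheory.volume (Metric.ball (0 : EuclideanSpace ℝ (Fin n)) 1)).toReal)
    (Θ : ℝ → ℝ) (Θ'1 : ℝ)
    (hmono : MonotoneOn Θ (Set.Icc 0 1)) (h0 : Θ 0 = 0)
    (hnn : ∀ s ∈ Set.Icc (0 : ℝ) 1, 0 ≤ Θ s)
    (hpos : 0 < Θ 1)
    (hderiv : HasDerivWithinAt Θ Θ'1 (Set.Iic 1) 1)
    (hcond : 4 * ((n : ℝ) - 1) * Θ 1 < Θ'1 ^ 2) :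
    ∃ ε₀ > (0 : ℝ), ∀ ε ∈ Set.Ioo (0 : ℝ) ε₀,
      (n : ℝ) * ω * (1 + ε) ^ (n - 1) * Θ (1 - Θ'1 * ε / 2)
        + ω * ((1 + ε) ^ n - 1) * Θ'1 ^ 2 / 4 < (n : ℝ) * ω * Θ 1 := by
  have hn' : (2:ℝ) ≤ (n:ℝ) := by exact_mod_cast hn
  have hωpos : 0 < ω := by
    rw [hω]
    exact ENNReal.toReal_pos (Metric.measure_ball_pos volume _ one_pos).ne'
      (MeasureTheory.measure_ball_lt_top).ne
  -- Θ'1 ≥ 0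
  have hΘ'nonneg : 0 ≤ Θ'1 := by
    have hd := hderiv
    rw [hasDerivWithinAt_iff_tendsto_slope] at hd
    have hIio : (Set.Iic (1:ℝ)) \ {1} = Set.Iio 1 := by
      ext x; simp [lt_iff_le_and_ne]
    rw [hIio] at hd
    have h1 : ∀ᶠ x in nhdsWithin (1:ℝ) (Set.Iio 1), 0 < x :=
      eventually_nhdsWithin_of_eventually_nhds (eventually_gt_nhds one_pos)
    have h2 : ∀ᶠ x in nhdsWithin (1:ℝ) (Set.Iio 1), x ∈ Set.Iio 1 :=
      eventually_mem_nhdsWithin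
    have h3 : ∀ᶠ x in nhdsWithin (1:ℝ) (Set.Iio 1), 0 ≤ slope Θ 1 x := by
      filter_upwards [h1, h2] with x hx0 hx1
      have hx1' : x < 1 := hx1
      have hΘle : Θ x ≤ Θ 1 :=
        hmono ⟨hx0.le, hx1'.le⟩ ⟨zero_le_one, le_refl 1⟩ hx1'.le
      have heq : slope Θ 1 x = (Θ 1 - Θ x) / (1 - x) := by
        rw [slope_def_field]
        rw [div_eq_div_iff (sub_ne_zero.mpr hx1'.ne) (sub_ne_zero.mpr hx1'.ne')]
        ring
      rw [heq]
      exact div_nonneg (by linarith) (by linarith)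
    exact ge_of_tendsto hd h3
  have hΘ'pos : 0 < Θ'1 := by
    rcases hΘ'nonneg.lt_or_eq with h | h
    · exact h
    · exfalso; rw [← h] at hcond; norm_num at hcond; nlinarith
  set F : ℝ → ℝ := fun ε => (n : ℝ) * ω * (1 + ε) ^ (n - 1) * Θ (1 - Θ'1 * ε / 2)
        + ω * ((1 + ε) ^ n - 1) * Θ'1 ^ 2 / 4 with hF_def
  -- derivative of inner map
  have hg : HasDerivAt (fun ε : ℝ => 1 - Θ'1 * ε / 2) (-(Θ'1/2)) 0 := by
    have h := (((hasDerivAt_id (0:ℝ)).const_mul Θ'1).div_const 2).const_sub 1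
    simp only [id_eq] at h
    refine h.congr_deriv ?_
    ring
  have hmaps : Set.MapsTo (fun ε : ℝ => 1 - Θ'1 * ε / 2) (Set.Ici 0) (Set.Iic 1) := by
    intro x hx
    simp only [Set.mem_Iic]
    have : 0 ≤ Θ'1 * x / 2 := div_nonneg (mul_nonneg hΘ'nonneg hx) (by norm_num)
    linarith
  have hd1 : HasDerivWithinAt Θ Θ'1 (Set.Iic 1) ((fun ε : ℝ => 1 - Θ'1 * ε / 2) 0) := by
    simpa using hderiv
  have hcomp : HasDerivWithinAt (fun ε : ℝ => Θ (1 - Θ'1 * ε / 2)) (Θ'1 * -(Θ'1/2))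
      (Set.Ici 0) 0 :=
    HasDerivWithinAt.comp (0:ℝ) hd1 hg.hasDerivWithinAt hmaps
  have hA : HasDerivWithinAt (fun ε : ℝ => (1 + ε) ^ (n - 1)) ((n : ℝ) - 1) (Set.Ici 0) 0 := by
    have h : HasDerivAt (fun ε : ℝ => (1 + ε) ^ (n - 1))
        ((n - 1 : ℕ) * (1 + 0) ^ (n - 1 - 1) * 1) 0 :=
      ((hasDerivAt_id (0:ℝ)).const_add 1).pow (n - 1)
    have h2 : ((n - 1 : ℕ) : ℝ) * (1 + 0) ^ (n - 1 - 1) * 1 = (n : ℝ) - 1 := by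
      have h1n : 1 ≤ n := le_trans one_le_two hn
      rw [Nat.cast_sub h1n]
      norm_num
    exact (h2 ▸ h).hasDerivWithinAt
  have hB : HasDerivWithinAt (fun ε : ℝ => (1 + ε) ^ n) ((n : ℝ)) (Set.Ici 0) 0 := by
    have h : HasDerivAt (fun ε : ℝ => (1 + ε) ^ n) ((n : ℕ) * (1 + 0) ^ (n - 1) * 1) 0 :=
      ((hasDerivAt_id (0:ℝ)).const_add 1).pow n
    have h2 : ((n : ℕ) : ℝ) * (1 + 0) ^ (n - 1) * 1 = (n : ℝ) := by norm_num
    exact (h2 ▸ h).hasDerivWithinAt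
  set c : ℝ := (n : ℝ) * ω * (((n:ℝ) - 1) * Θ 1 - Θ'1 ^ 2 / 4) with hc_def
  have hF : HasDerivWithinAt F c (Set.Ici 0) 0 := by
    have hprod := (hA.mul hcomp).const_mul ((n : ℝ) * ω)
    have hsecond := (((hB.sub_const 1).const_mul ω).mul_const (Θ'1 ^ 2)).div_const 4
    have hsum := hprod.add hsecond
    refine (hsum.congr_deriv ?_).congr (fun y _ => ?_) ?_
    · rw [hc_def, mul_zero, zero_div, sub_zero, add_zero, one_pow]
      ring
    · simp only [hF_def, Pi.add_apply, Pi.mul_apply]; ring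
    · simp only [hF_def, Pi.add_apply, Pi.mul_apply]; ring
  have hcneg : c < 0 := by
    have : ((n:ℝ) - 1) * Θ 1 - Θ'1 ^ 2 / 4 < 0 := by nlinarith
    exact mul_neg_of_pos_of_neg (by positivity) this
  rw [hasDerivWithinAt_iff_tendsto_slope] at hF
  have hset : (Set.Ici (0:ℝ)) \ {0} = Set.Ioi 0 := by
    ext x; simp [lt_iff_le_and_ne, eq_comm]
  rw [hset] at hF
  have hev : ∀ᶠ ε in nhdsWithin (0:ℝ) (Set.Ioi 0), slope F 0 ε < 0 :=
    hF.eventually_lt_const hcneg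
  rw [eventually_nhdsWithin_iff] at hev
  rcases Metric.eventually_nhds_iff.mp hev with ⟨ε₀, hε₀pos, hball⟩
  refine ⟨ε₀, hε₀pos, fun ε hε => ?_⟩
  have hslope : slope F 0 ε < 0 := by
    apply hball (by simpa [abs_of_pos hε.1] using hε.2) hε.1
  have hF0 : F 0 = (n : ℝ) * ω * Θ 1 := by simp [hF_def]
  have hseq : slope F 0 ε = (F ε - F 0) / ε := by rw [slope_def_field]; ring_nf
  rw [hseq] at hslope
  have hFε : F ε < F 0 := by
    have hm := mul_neg_of_neg_of_pos hslope hε.1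
    rw [div_mul_cancel₀ _ hε.1.ne'] at hm
    linarith
  rw [hF0] at hFε
  exact hFε
end
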